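/- Let Γ be a finite connected multigraph with vertex set V, half-edge set H (each edge e consisting of two half-edges h, h' at vertices u, v), and let I : H → ℤ be a function with I(h) + I(h') = 0 for every edge. Assume Γ has no strict cycle with respect to I, i.e. no closed directed path of edges (h_1,h_1'),…,(h_k,h_k') with all I(h_i) ≥ 0 and at least one I(h_i) > 0. Then there exist a function d : V → ℤ and an assignment of positive integers ℓ(e) to each edge e such that for every edge e = (h,h') with h at u and h' at v, one has d(u) + I(h)·ℓ(e) = d(v). -/

import Mathlib

namespace TwistAux

variable {V H : Type} (vertexOf : H → V) (ι : H → H) (I : H → ℤ)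

/-- A directed path of half-edges with nonnegative twist from `a` to `b`. -/
def IsPath : List H → V → V → Prop
  | [], a, b => a = b
  | h :: t, a, b => vertexOf h = a ∧ 0 ≤ I h ∧ IsPath t (vertexOf (ι h)) b

lemma isPath_nonneg : ∀ (l : List H) (a b : V), IsPath vertexOf ι I l a b →
    ∀ h ∈ l, 0 ≤ I h := by
  intro l
  induction l with
  | nil => intro a b _ h hh; simp at hh
  | cons x t ih =>
    intro a b hp h hh
    rcases List.mem_cons.mp hh with rfl | hh
    · exact hp.2.1
    · exact ih _ _ hp.2.2 h hh

lemma isPath_chain (x : H) : ∀ (l : List H) (a b : V), IsPath vertexOf ι I l a b →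
    ∀ j, j + 1 < l.length →
      vertexOf (ι (l.getD j x)) = vertexOf (l.getD (j + 1) x) := by
  intro l
  induction l with
  | nil => intro a b _ j hj; simp at hj
  | cons h t ih =>
    intro a b hp j hj
    cases j with
    | zero =>
      match t, hp.2.2 with
      | h' :: t', hp' => simpa using (hp'.1).symm
    | succ j =>
      simp only [List.getD_cons_succ]
      exact ih _ _ hp.2.2 j (by simpa using hj)

lemma isPath_last (x : H) : ∀ (l : List H) (a b : V), IsPath vertexOf ι I l a b →
    l ≠ [] → vertexOf (ι (l.getD (l.length - 1) x)) = b := by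
  intro l
  induction l with
  | nil => intro a b _ hne; exact absurd rfl hne
  | cons h t ih =>
    intro a b hp _
    cases t with
    | nil => simpa [IsPath] using hp.2.2
    | cons h' t' =>
      have : (h :: h' :: t').length - 1 = (h' :: t').length - 1 + 1 := by
        simp
      rw [this, List.getD_cons_succ]
      exact ih _ _ hp.2.2 (by simp)

lemma reach_path {a b : V}
    (hr : Relation.ReflTransGen
      (fun a b => ∃ h, vertexOf h = a ∧ vertexOf (ι h) = b ∧ 0 ≤ I h) a b) :
    ∃ l, IsPath vertexOf ι I l a b := by
  induction hr using Relation.ReflTransGen.head_induction_on with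
  | refl => exact ⟨[], rfl⟩
  | head hstep _ ih =>
    obtain ⟨l, hl⟩ := ih
    obtain ⟨h, h1, h2, h3⟩ := hstep
    exact ⟨h :: l, h1, h3, h2 ▸ hl⟩

end TwistAux

open TwistAux

/-- Existence of a level function and edge lengths for a twist without strict cycles
(condition (*) in the proof of Proposition 4.6 of the paper).

The finite connected multigraph is modelled by a finite vertex set `V`, a finite set `H`
of half-edges with a fixed-point free involution `ι` (whose orbits are the edges) and a
vertex assignment `vertexOf`.  A twist `I : H → ℤ` satisfies `I h + I (ι h) = 0` on every
edge.  A strict cycle is a closed directed path of edges with all twists `≥ 0` and at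
least one `> 0`.  If there is no strict cycle, there are `d : V → ℤ` and positive edge
lengths `ℓ` (constant on edges) with `d (vertexOf h) + I h * ℓ h = d (vertexOf (ι h))`. -/
theorem twist_no_strict_cycle_exists_level_function
    (V H : Type) [Fintype V] [Fintype H]
    (vertexOf : H → V) (ι : H → H)
    (hinv : ∀ h, ι (ι h) = h) (hnofix : ∀ h, ι h ≠ h)
    (I : H → ℤ) (hI : ∀ h, I h + I (ι h) = 0)
    (hconn : ∀ u v : V, Relation.ReflTransGen
      (fun a b => ∃ h, vertexOf h = a ∧ vertexOf (ι h) = b) u v)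
    (hnsc : ¬ ∃ (k : ℕ) (c : ℕ → H), 0 < k ∧ (∀ i, c (i + k) = c i) ∧
        (∀ i, vertexOf (ι (c i)) = vertexOf (c (i + 1))) ∧
        (∀ i, 0 ≤ I (c i)) ∧ (∃ i, 0 < I (c i))) :
    ∃ (d : V → ℤ) (ℓ : H → ℤ),
      (∀ h, ℓ (ι h) = ℓ h) ∧ (∀ h, 0 < ℓ h) ∧
      (∀ h, d (vertexOf h) + I h * ℓ h = d (vertexOf (ι h))) := by
  classical
  set R : V → V → Prop :=
    fun a b => ∃ h, vertexOf h = a ∧ vertexOf (ι h) = b ∧ 0 ≤ I h with hR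
  -- no strict cycle ⇒ no way back along nonnegative edges from the head of a positive edge
  have noback : ∀ h : H, 0 < I h →
      ¬ Relation.ReflTransGen R (vertexOf (ι h)) (vertexOf h) := by
    intro h hpos hreach
    obtain ⟨l, hl⟩ := reach_path vertexOf ι I hreach
    set L : List H := h :: l with hLdef
    have hLpath : IsPath vertexOf ι I L (vertexOf h) (vertexOf h) :=
      ⟨rfl, le_of_lt hpos, hl⟩
    set k : ℕ := L.length with hk
    have hkpos : 0 < k := by simp [hk, hLdef]
    apply hnsc
    refine ⟨k, fun i => L.getD (i % k) h, hkpos, ?_, ?_, ?_, ?_⟩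
    · intro i; simp [Nat.add_mod_right]
    · intro i
      have hik : i % k < k := Nat.mod_lt _ hkpos
      have h0 : (i + 1) % k = (i % k + 1) % k := (Nat.mod_add_mod i k 1).symm
      by_cases hcase : i % k + 1 < k
      · have h1 : (i + 1) % k = i % k + 1 := by rw [h0, Nat.mod_eq_of_lt hcase]
        simp only [h1]
        exact isPath_chain vertexOf ι I h L _ _ hLpath (i % k) (by omega)
      · have hke : i % k + 1 = k := by omega
        have h1 : (i + 1) % k = 0 := by rw [h0, hke, Nat.mod_self]
        simp only [h1]
        have hL0 : L.getD 0 h = h := by rw [hLdef]; exact List.getD_cons_zero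
        rw [hL0]
        have := isPath_last vertexOf ι I h L _ _ hLpath (by simp [hLdef])
        have hidx : i % k = L.length - 1 := by omega
        rw [hidx]
        exact this
    · intro i
      have hik : i % k < k := Nat.mod_lt _ hkpos
      have hmem : L.getD (i % k) h ∈ L := by
        rw [List.getD_eq_getElem L h (by omega)]
        exact List.getElem_mem _
      exact isPath_nonneg vertexOf ι I L _ _ hLpath _ hmem
    · refine ⟨0, ?_⟩
      show 0 < I (L.getD (0 % k) h)
      rw [Nat.zero_mod, hLdef, List.getD_cons_zero]
      exact hpos
  -- reachability counting function
  set S : V → Finset V :=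
    fun v => Finset.univ.filter (fun w => Relation.ReflTransGen R w v) with hS
  set d0 : V → ℕ := fun v => (S v).card with hd0
  have hmono : ∀ a b : V, R a b → S a ⊆ S b := by
    intro a b hab w hw
    simp only [hS, Finset.mem_filter, Finset.mem_univ, true_and] at hw ⊢
    exact hw.tail hab
  have hRedge : ∀ h : H, 0 ≤ I h → R (vertexOf h) (vertexOf (ι h)) :=
    fun h hh => ⟨h, rfl, rfl, hh⟩
  -- zero edges: equal levels
  have hzero : ∀ h : H, I h = 0 → d0 (vertexOf h) = d0 (vertexOf (ι h)) := by
    intro h hh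
    have h1 := hmono _ _ (hRedge h (by omega))
    have h2 := hmono _ _ (hRedge (ι h) (by have := hI h; omega))
    rw [hinv h] at h2
    exact le_antisymm (Finset.card_le_card h1) (Finset.card_le_card h2)
  -- positive edges: strictly increasing levels
  have hstrict : ∀ h : H, 0 < I h → d0 (vertexOf h) < d0 (vertexOf (ι h)) := by
    intro h hh
    apply Finset.card_lt_card
    refine (Finset.ssubset_iff_of_subset (hmono _ _ (hRedge h (le_of_lt hh)))).mpr
      ⟨vertexOf (ι h), ?_, ?_⟩
    · simp only [hS, Finset.mem_filter, Finset.mem_univ, true_and]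
      exact Relation.ReflTransGen.refl
    · simp only [hS, Finset.mem_filter, Finset.mem_univ, true_and]
      exact noback h hh
  -- common multiple of all twists
  set N : ℕ := ∏ x : H, max 1 (I x).natAbs with hN
  have hNpos : 0 < N :=
    Finset.prod_pos (fun x _ => lt_of_lt_of_le Nat.zero_lt_one (le_max_left _ _))
  have hdvdN : ∀ h : H, I h ≠ 0 → I h ∣ (N : ℤ) := by
    intro h hne
    have h1 : (I h).natAbs ∣ N := by
      have h2 : max 1 (I h).natAbs = (I h).natAbs :=
        max_eq_right (Nat.one_le_iff_ne_zero.mpr (Int.natAbs_ne_zero.mpr hne))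
      rw [hN, ← h2]
      exact Finset.dvd_prod_of_mem _ (Finset.mem_univ h)
    exact Int.natAbs_dvd.mp (Int.natCast_dvd_natCast.mpr h1)
  set d : V → ℤ := fun v => (N : ℤ) * (d0 v : ℤ) with hd
  set ℓ : H → ℤ := fun h =>
    if I h = 0 then 1 else (d (vertexOf (ι h)) - d (vertexOf h)) / I h with hℓ
  have hdiff : ∀ h : H, d (vertexOf (ι h)) - d (vertexOf h) =
      (N : ℤ) * ((d0 (vertexOf (ι h)) : ℤ) - (d0 (vertexOf h) : ℤ)) := by
    intro h; simp only [hd]; ring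
  have hquot : ∀ h : H, I h ≠ 0 →
      I h * ℓ h = d (vertexOf (ι h)) - d (vertexOf h) := by
    intro h hne
    simp only [hℓ, if_neg hne]
    refine Int.mul_ediv_cancel' ?_
    rw [hdiff h]
    exact Dvd.dvd.mul_right (hdvdN h hne) _
  have hlpos : ∀ h : H, 0 < ℓ h := by
    intro h
    rcases lt_trichotomy (I h) 0 with hlt | heq | hgt
    · have hne : I h ≠ 0 := ne_of_lt hlt
      have hpos' : 0 < I (ι h) := by have := hI h; omega
      have := hstrict (ι h) hpos'
      rw [hinv h] at this
      have hdneg : d (vertexOf (ι h)) - d (vertexOf h) < 0 := by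
        rw [hdiff h]
        have hc : (d0 (vertexOf (ι h)) : ℤ) < (d0 (vertexOf h) : ℤ) := by
          exact_mod_cast this
        have hNc : (0 : ℤ) < (N : ℤ) := by exact_mod_cast hNpos
        exact mul_neg_of_pos_of_neg hNc (sub_neg.mpr hc)
      have hq := hquot h hne
      nlinarith [hq, hdneg, hlt]
    · simp [hℓ, heq]
    · have hne : I h ≠ 0 := ne_of_gt hgt
      have := hstrict h hgt
      have hdpos : 0 < d (vertexOf (ι h)) - d (vertexOf h) := by
        rw [hdiff h]
        have hc : (d0 (vertexOf h) : ℤ) < (d0 (vertexOf (ι h)) : ℤ) := by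
          exact_mod_cast this
        have hNc : (0 : ℤ) < (N : ℤ) := by exact_mod_cast hNpos
        exact mul_pos hNc (sub_pos.mpr hc)
      have hq := hquot h hne
      nlinarith [hq, hdpos, hgt]
  have hsymm : ∀ h : H, ℓ (ι h) = ℓ h := by
    intro h
    by_cases heq : I h = 0
    · have heq' : I (ι h) = 0 := by have := hI h; omega
      simp [hℓ, heq, heq']
    · have hne' : I (ι h) ≠ 0 := by have := hI h; omega
      have hq1 := hquot h heq
      have hq2 := hquot (ι h) hne'
      rw [hinv h] at hq2
      have hIι : I (ι h) = -I h := by have := hI h; omega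
      rw [hIι] at hq2
      have : I h * ℓ (ι h) = I h * ℓ h := by linarith
      exact mul_left_cancel₀ heq this
  refine ⟨d, ℓ, hsymm, hlpos, ?_⟩
  intro h
  by_cases heq : I h = 0
  · have h1 := hzero h heq
    simp only [heq, zero_mul, add_zero, hd]
    exact_mod_cast congrArg (fun n : ℕ => (N : ℤ) * (n : ℤ)) h1
  · rw [hquot h heq]; ring
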